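/- Let γ : I → ℂ be a twice-differentiable unit-speed curve with γ(s) ≠ 0 for all s, and let F(s,φ) = (γ(s)·cos φ, γ(s)·sin φ). Then for all s,φ: ∂²F/∂s² + (⟨γ(s),γ'(s)⟩/|γ(s)|²)·∂F/∂s + (1/|γ(s)|²)·∂²F/∂φ² = (h(s)·cos φ, h(s)·sin φ), where h(s) = κ(s) − γ⊥(s)/|γ(s)|². (The left-hand side is the Laplace–Beltrami operator of the induced metric applied to F, i.e., the mean curvature vector of the equivariant Lagrangian; hence Lagrangian mean curvature flow of equivariant Lagrangians reduces to the curve flow ∂γ/∂t = κ − γ⊥/|γ|².) -/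

import Mathlib

/-- For a twice-differentiable unit-speed curve `γ : I → ℂ` with `γ(s) ≠ 0`, and the
equivariant surface `F(s,φ) = (γ(s)·cos φ, γ(s)·sin φ)`, the Laplace–Beltrami operator of the
induced metric applied to `F`, namely
`∂²F/∂s² + (⟨γ,γ'⟩/|γ|²)·∂F/∂s + (1/|γ|²)·∂²F/∂φ²`,
equals `(h(s)·cos φ, h(s)·sin φ)` where `h = κ − γ⊥/|γ|²`, `κ = γ''` and
`γ⊥ = γ − ⟨γ,γ'⟩·γ'` with `⟨a,b⟩ = Re(a·conj b)`.  This is the mean curvature vector of the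
equivariant Lagrangian, so Lagrangian mean curvature flow reduces to `∂γ/∂t = κ − γ⊥/|γ|²`. -/
theorem equivariant_mean_curvature (I : Set ℝ) (hI : IsOpen I) (γ γ' γ'' : ℝ → ℂ)
    (hd1 : ∀ s ∈ I, HasDerivAt γ (γ' s) s)
    (hd2 : ∀ s ∈ I, HasDerivAt γ' (γ'' s) s)
    (hunit : ∀ s ∈ I, ‖γ' s‖ = 1)
    (hne : ∀ s ∈ I, γ s ≠ 0) :
    ∀ s ∈ I, ∀ φ : ℝ,
      deriv (fun σ : ℝ =>
          deriv (fun τ : ℝ => (γ τ * (Real.cos φ : ℂ), γ τ * (Real.sin φ : ℂ))) σ) s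
      + ((γ s * star (γ' s)).re / Complex.normSq (γ s)) •
          deriv (fun σ : ℝ => (γ σ * (Real.cos φ : ℂ), γ σ * (Real.sin φ : ℂ))) s
      + (Complex.normSq (γ s))⁻¹ •
          deriv (fun ψ : ℝ =>
            deriv (fun χ : ℝ => (γ s * (Real.cos χ : ℂ), γ s * (Real.sin χ : ℂ))) ψ) φ
      = ((γ'' s - (γ s - ((γ s * star (γ' s)).re : ℝ) • γ' s) / (Complex.normSq (γ s) : ℂ))
            * (Real.cos φ : ℂ),
         (γ'' s - (γ s - ((γ s * star (γ' s)).re : ℝ) • γ' s) / (Complex.normSq (γ s) : ℂ))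
            * (Real.sin φ : ℂ)) := by
  intro s hs φ
  set c : ℂ := (Real.cos φ : ℂ)
  set d : ℂ := (Real.sin φ : ℂ)
  -- first s-derivative
  have hF1 : ∀ t ∈ I,
      deriv (fun τ : ℝ => (γ τ * c, γ τ * d)) t = (γ' t * c, γ' t * d) := by
    intro t ht
    exact (((hd1 t ht).mul_const c).prodMk ((hd1 t ht).mul_const d)).deriv
  -- second s-derivative
  have hF2 : deriv (fun σ : ℝ => deriv (fun τ : ℝ => (γ τ * c, γ τ * d)) σ) s
      = (γ'' s * c, γ'' s * d) := by
    have hev : (fun σ : ℝ => deriv (fun τ : ℝ => (γ τ * c, γ τ * d)) σ)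
        =ᶠ[nhds s] fun σ => (γ' σ * c, γ' σ * d) :=
      Filter.eventuallyEq_of_mem (hI.mem_nhds hs) hF1
    rw [hev.deriv_eq]
    exact (((hd2 s hs).mul_const c).prodMk ((hd2 s hs).mul_const d)).deriv
  -- φ derivatives
  have hG1 : ∀ ψ : ℝ,
      deriv (fun χ : ℝ => (γ s * (Real.cos χ : ℂ), γ s * (Real.sin χ : ℂ))) ψ
      = (γ s * ((-Real.sin ψ : ℝ) : ℂ), γ s * ((Real.cos ψ : ℝ) : ℂ)) := by
    intro ψ
    exact ((((Real.hasDerivAt_cos ψ).ofReal_comp).const_mul (γ s)).prodMk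
      (((Real.hasDerivAt_sin ψ).ofReal_comp).const_mul (γ s))).deriv
  have hG2 : deriv (fun ψ : ℝ =>
      deriv (fun χ : ℝ => (γ s * (Real.cos χ : ℂ), γ s * (Real.sin χ : ℂ))) ψ) φ
      = (γ s * ((-Real.cos φ : ℝ) : ℂ), γ s * ((-Real.sin φ : ℝ) : ℂ)) := by
    rw [funext hG1]
    have h1 : HasDerivAt (fun ψ : ℝ => γ s * ((-Real.sin ψ : ℝ) : ℂ))
        (γ s * ((-Real.cos φ : ℝ) : ℂ)) φ := by
      have := (((Real.hasDerivAt_sin φ).neg).ofReal_comp).const_mul (γ s)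
      simpa using this
    have h2 : HasDerivAt (fun ψ : ℝ => γ s * ((Real.cos ψ : ℝ) : ℂ))
        (γ s * ((-Real.sin φ : ℝ) : ℂ)) φ := by
      have := (((Real.hasDerivAt_cos φ)).ofReal_comp).const_mul (γ s)
      simpa using this
    exact (h1.prodMk h2).deriv
  rw [hF2, hF1 s hs, hG2]
  have hn : (Complex.normSq (γ s) : ℂ) ≠ 0 := by
    exact_mod_cast Complex.ofReal_ne_zero.mpr (ne_of_gt (Complex.normSq_pos.mpr (hne s hs)))
  have hnr : Complex.normSq (γ s) ≠ 0 := ne_of_gt (Complex.normSq_pos.mpr (hne s hs))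
  rw [Prod.smul_mk, Prod.smul_mk, Prod.mk_add_mk, Prod.mk_add_mk, Prod.mk.injEq]
  constructor <;>
  · rw [Complex.real_smul, Complex.real_smul, Complex.real_smul]
    push_cast
    simp only [c, d, Complex.ofReal_cos, Complex.ofReal_sin]
    field_simp
    simp only [Complex.real_smul]
    ring
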